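/- For every prime p, the polynomial P_{2,p}(z) ∈ 𝔽_p[z] is separable (squarefree) over the algebraic closure of 𝔽_p; in particular P_{2,p} and its derivative P_{2,p}′ have no common root. -/

import Mathlib

/-- For every prime `p`, the truncation `P_{2,p}` of `f₂|_p` in degrees `< p` is squarefree
(separable) over the algebraic closure of `𝔽_p`; in particular `P_{2,p}` and its derivative
have no common root there. -/
theorem stmt12 (p : ℕ) [hp : Fact p.Prime]
    (a : ℕ → ℤ)
    (ha : ∀ n : ℕ, (a n : ℚ) =
      ((-1 : ℚ) / (2 * (n : ℚ) - 1)) * (Nat.choose (2 * n) n : ℚ) ^ 2)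
    (P₂p : Polynomial (ZMod p))
    (hP₂p : P₂p = ∑ n ∈ Finset.range p, Polynomial.C ((a n : ZMod p)) * Polynomial.X ^ n) :
    Squarefree (P₂p.map (algebraMap (ZMod p) (AlgebraicClosure (ZMod p)))) ∧
      ∀ x : AlgebraicClosure (ZMod p),
        ¬ ((Polynomial.aeval x) P₂p = 0 ∧ (Polynomial.aeval x) (Polynomial.derivative P₂p) = 0) := by
  classical
  open Polynomial in
  -- Step 1: the integer three-term recurrence satisfied by the coefficients.
  have hrec : ∀ n : ℕ, ((n : ℤ) + 1)^2 * a (n+1) = (16*(n:ℤ)^2 - 4) * a n := by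
    intro n
    have key : ((n : ℚ) + 1) * (Nat.choose (2*(n+1)) (n+1) : ℚ)
        = 2 * (2*(n:ℚ) + 1) * (Nat.choose (2*n) n : ℚ) := by
      have := Nat.succ_mul_centralBinom_succ n
      rw [Nat.centralBinom, Nat.centralBinom] at this
      exact_mod_cast this
    have hsq : (((n : ℚ) + 1) * (Nat.choose (2*(n+1)) (n+1) : ℚ))^2
        = (2 * (2*(n:ℚ) + 1) * (Nat.choose (2*n) n : ℚ))^2 := by rw [key]
    have h1 := ha (n+1)
    have h2 := ha n
    have hne1 : (2*(n:ℚ) + 1) ≠ 0 := by positivity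
    have hne3 : (2*((n:ℚ)+1) - 1) ≠ 0 := by
      intro h; nlinarith [Nat.cast_nonneg (α := ℚ) n]
    have hne2 : (2*(n:ℚ) - 1) ≠ 0 := by
      rcases n with _ | k
      · norm_num
      · push_cast; intro h; nlinarith [Nat.cast_nonneg (α := ℚ) k]
    have goal : (((n:ℚ)) + 1)^2 * (a (n+1) : ℚ) = (16*(n:ℚ)^2 - 4) * (a n : ℚ) := by
      rw [h1, h2]
      push_cast
      rw [div_mul_eq_mul_div, div_mul_eq_mul_div, mul_div_assoc', mul_div_assoc', div_eq_div_iff hne3 hne2]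
      linear_combination (-(2*(n:ℚ)-1)) * hsq
    exact_mod_cast goal
  -- Step 2: coefficients of P₂p.
  have hcoeff : ∀ n : ℕ, P₂p.coeff n = if n < p then ((a n : ZMod p)) else 0 := by
    intro n
    rw [hP₂p, finset_sum_coeff]
    simp [coeff_C_mul, coeff_X_pow, Finset.sum_ite_eq, Finset.mem_range]
  -- Step 3: the top coefficient a (p-1) vanishes mod p.
  have hbp1 : ((a (p-1) : ZMod p)) = 0 := by
    by_cases h2 : p = 2
    · subst h2
      have ha1 : a 1 = -4 := by
        have := ha 1
        have hc : (Nat.choose 2 1 : ℚ) = 2 := by norm_num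
        rw [hc] at this
        norm_num at this
        exact_mod_cast this
      show ((a 1 : ZMod 2)) = 0
      rw [ha1, ZMod.intCast_zmod_eq_zero_iff_dvd]
      norm_num
    by_cases h3 : p = 3
    · subst h3
      have ha2 : a 2 = -12 := by
        have := ha 2
        have hc : (Nat.choose 4 2 : ℚ) = 6 := by norm_num [Nat.choose]
        rw [show (2*2 : ℕ) = 4 from rfl] at this
        rw [hc] at this
        norm_num at this
        exact_mod_cast this
      show ((a 2 : ZMod 3)) = 0
      rw [ha2, ZMod.intCast_zmod_eq_zero_iff_dvd]
      norm_num
    · -- p ≥ 5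
      have hge : 2 ≤ p := hp.out.two_le
      have hp5 : 5 ≤ p := by
        by_contra hlt
        push_neg at hlt
        interval_cases p
        · exact h2 rfl
        · exact h3 rfl
        · exact absurd hp.out (by norm_num)
      have h := hrec (p-1)
      have hcast := congrArg (fun z : ℤ => (z : ZMod p)) h
      push_cast at hcast
      rw [show ((p-1 : ℕ) : ZMod p) = ((p : ZMod p) - 1) by
        push_cast [Nat.cast_sub hp.out.one_le]; ring] at hcast
      rw [ZMod.natCast_self p] at hcast
      ring_nf at hcast
      have h12 : (12 : ZMod p) ≠ 0 := by
        intro h0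
        have h0' : ((12 : ℕ) : ZMod p) = 0 := by exact_mod_cast h0
        have hdvd := (ZMod.natCast_eq_zero_iff 12 p).mp h0'
        have hle : p ≤ 12 := Nat.le_of_dvd (by norm_num) hdvd
        interval_cases p <;> first | omega | exact absurd hp.out (by norm_num)
      rcases mul_eq_zero.mp hcast.symm with h0 | h0
      · exact h0
      · exact absurd h0 h12
  -- Step 4: the hypergeometric differential equation, as a polynomial identity mod p.
  have hode : X * (1 - 16*X) * derivative (derivative P₂p) + (1 - 16*X) * derivative P₂p
      + 4 * P₂p = 0 := by
    have hrecZM : ∀ n : ℕ, ((n : ZMod p)+1)^2 * ((a (n+1) : ZMod p))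
        = (16*(n : ZMod p)^2 - 4) * ((a n : ZMod p)) := by
      intro n
      have := congrArg (fun z : ℤ => (z : ZMod p)) (hrec n)
      push_cast at this
      exact this
    have hcrec : ∀ n : ℕ, ((n : ZMod p)+1)^2 * P₂p.coeff (n+1)
        = (16*(n : ZMod p)^2 - 4) * P₂p.coeff n := by
      intro n
      rw [hcoeff (n+1), hcoeff n]
      rcases lt_trichotomy (n+1) p with h | h | h
      · rw [if_pos h, if_pos (by omega)]
        exact hrecZM n
      · rw [if_neg (by omega), if_pos (by omega)]
        have hn : n = p - 1 := by omega
        rw [hn, hbp1]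
        ring
      · rw [if_neg (by omega), if_neg (by omega)]
        ring
    set D := derivative (X * derivative P₂p) with hD
    have hDc : ∀ n : ℕ, D.coeff n = P₂p.coeff (n+1) * ((n : ZMod p)+1) * ((n : ZMod p)+1) := by
      intro n
      rw [hD, coeff_derivative, coeff_X_mul, coeff_derivative]
    have hmain : D - 16 * (D * X) + 4 * P₂p = 0 := by
      ext n
      simp only [coeff_add, coeff_sub, coeff_zero, Polynomial.coeff_ofNat_mul]
      rcases n with _ | n
      · simp only [Polynomial.coeff_mul_X_zero, hDc 0]
        have := hcrec 0
        push_cast at this ⊢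
        linear_combination this
      · rw [Polynomial.coeff_mul_X, hDc (n+1), hDc n]
        have := hcrec (n+1)
        push_cast at this ⊢
        linear_combination this
    have hDeq : D = derivative P₂p + X * derivative (derivative P₂p) := by
      rw [hD, derivative_mul, derivative_X, one_mul]
    calc X * (1 - 16*X) * derivative (derivative P₂p) + (1 - 16*X) * derivative P₂p + 4 * P₂p
        = D - 16 * (D * X) + 4 * P₂p := by rw [hDeq]; ring
      _ = 0 := hmain
  -- Step 5: transfer to the algebraic closure.
  set K := AlgebraicClosure (ZMod p) with hK
  set Pm := P₂p.map (algebraMap (ZMod p) K) with hPmdef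
  have ha0 : a 0 = 1 := by
    have := ha 0
    norm_num at this
    exact_mod_cast this
  have hc0 : Pm.coeff 0 = 1 := by
    rw [hPmdef, Polynomial.coeff_map, hcoeff 0, if_pos hp.out.pos, ha0]
    simp
  have hPm0 : Pm ≠ 0 := by
    intro h; rw [h] at hc0; simp at hc0
  have hodeK : X * (1 - 16*X) * derivative (derivative Pm) + (1 - 16*X) * derivative Pm
      + 4 * Pm = 0 := by
    have h := congrArg (Polynomial.map (algebraMap (ZMod p) K)) hode
    simp only [Polynomial.map_add, Polynomial.map_mul, Polynomial.map_one, Polynomial.map_sub,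
      Polynomial.map_X, Polynomial.map_ofNat, Polynomial.map_zero,
      ← Polynomial.derivative_map] at h
    rw [← hPmdef] at h
    exact h
  have hdeg : Pm.natDegree < p := by
    have h1 : P₂p.natDegree ≤ p - 1 := by
      rw [Polynomial.natDegree_le_iff_coeff_eq_zero]
      intro N hN
      rw [hcoeff N, if_neg (by omega)]
    have h2 : Pm.natDegree ≤ P₂p.natDegree := Polynomial.natDegree_map_le
    have := hp.out.pos
    omega
  -- Step 6: no root of multiplicity ≥ 2 over the algebraic closure.
  haveI : CharP K p := charP_of_injective_algebraMap
    (algebraMap (ZMod p) K).injective p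
  have hC : ∀ α : K, ¬ ((X - C α)^2 ∣ Pm) := by
    intro α hdvd
    set m := Pm.rootMultiplicity α with hm
    have hm2 : 2 ≤ m := (Polynomial.le_rootMultiplicity_iff hPm0).mpr hdvd
    set Q := Pm /ₘ (X - C α)^m with hQ
    have hQα : Q.eval α ≠ 0 := Polynomial.eval_divByMonic_pow_rootMultiplicity_ne_zero α hPm0
    have hfac : (X - C α)^m * Q = Pm := Polynomial.pow_mul_divByMonic_rootMultiplicity_eq Pm α
    obtain ⟨k, hk⟩ : ∃ k, m = k + 2 := ⟨m - 2, by omega⟩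
    have hmlt : m < p := by
      have h1 : ((X - C α)^m).natDegree ≤ Pm.natDegree :=
        Polynomial.natDegree_le_of_dvd ⟨Q, hfac.symm⟩ hPm0
      rw [Polynomial.natDegree_pow, Polynomial.natDegree_X_sub_C, mul_one] at h1
      omega
    have hcastne : ∀ j : ℕ, 0 < j → j < p → ((j : K)) ≠ 0 := by
      intro j hj0 hjp h0
      exact Nat.not_dvd_of_pos_of_lt hj0 hjp ((CharP.cast_eq_zero_iff K p j).mp h0)
    have hk2 : ((k : K) + 2) ≠ 0 := by
      have := hcastne (k+2) (by omega) (by omega)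
      push_cast at this; exact this
    have hk1 : ((k : K) + 1) ≠ 0 := by
      have := hcastne (k+1) (by omega) (by omega)
      push_cast at this; exact this
    set S : K[X] := X - C α with hS
    have hSd : derivative S = 1 := by
      rw [hS, derivative_sub, derivative_X, derivative_C, sub_zero]
    have hSne : S ≠ 0 := Polynomial.X_sub_C_ne_zero α
    have hSev : S.eval α = 0 := by rw [hS]; simp
    rw [hk] at hfac
    have he1 : 2 + k - 1 = k + 1 := by omega
    have he2 : k + 2 - 1 = k + 1 := by omega
    have hd1 : derivative Pm
        = ((k : K[X]) + 2) * (S^(k+1) * Q) + S^(k+2) * derivative Q := by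
      rw [← hfac]
      simp only [derivative_mul, derivative_pow, hSd, he1, he2, Nat.add_sub_cancel, map_natCast,
        map_add, map_mul, map_ofNat, Nat.cast_add, Nat.cast_ofNat, mul_one]
      ring
    have hd2 : derivative (derivative Pm)
        = ((k : K[X]) + 2) * (((k : K[X]) + 1) * (S^k * Q))
          + 2*(((k : K[X]) + 2) * (S^(k+1) * derivative Q))
          + S^(k+2) * derivative (derivative Q) := by
      rw [hd1]
      simp only [derivative_add, derivative_mul, derivative_pow, derivative_natCast,
        derivative_ofNat, derivative_one, hSd, he1, he2, Nat.add_sub_cancel, map_natCast,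
        map_add, map_mul, map_ofNat, Nat.cast_add, Nat.cast_ofNat, mul_one, zero_mul,
        zero_add, add_zero]
      ring
    set G : K[X] := X * (1 - 16*X) * (((k : K[X])+2) * (((k : K[X])+1) * Q)
        + 2*(((k : K[X])+2) * (S * derivative Q)) + S^2 * derivative (derivative Q))
      + (1 - 16*X) * S * (((k : K[X])+2) * Q + S * derivative Q)
      + 4 * (S^2 * Q) with hG
    have hSkG : S^k * G = 0 := by
      rw [← hodeK, hG, hd2, hd1, ← hfac]
      ring
    have hG0 : G = 0 := by
      rcases mul_eq_zero.mp hSkG with h | h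
      · exact absurd h (pow_ne_zero k hSne)
      · exact h
    have heval := congrArg (eval α) hG0
    simp only [hG, eval_add, eval_mul, eval_sub, eval_pow, eval_X, eval_C, eval_one, eval_ofNat,
      eval_natCast, hSev, mul_zero, zero_mul, add_zero, zero_add, eval_zero, zero_pow] at heval
    norm_num at heval
    have hPmEval : Pm.eval α = 0 := by
      rw [← hfac]
      simp [hSev]
    rcases heval with h | h
    swap
    · rcases h with h' | h' | h'
      · exact hk2 h'
      · exact hk1 h'
      · exact hQα h'
    rcases h with h0 | h16
    · -- α = 0 is impossible since the constant coefficient is 1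
      rw [h0] at hPmEval
      rw [← Polynomial.coeff_zero_eq_eval_zero, hc0] at hPmEval
      exact one_ne_zero hPmEval
    · -- the case 16 α = 1 : factor 1 - 16 X = -16 S and go one order deeper
      have h16a : (16 : K) * α = 1 := by linear_combination -h16
      have hCa : (16 : K[X]) * C α = 1 := by
        have h1 : C ((16:K)*α) = C (1:K) := congrArg C h16a
        simpa [map_mul, map_ofNat] using h1
      have hCs : (1 - 16*X : K[X]) = -16 * S := by
        rw [hS]
        linear_combination -hCa
      set G₂ : K[X] := -16*X*(((k : K[X])+2) * (((k : K[X])+1)*Q)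
          + 2*(((k : K[X])+2)*(S*derivative Q)) + S^2*derivative (derivative Q))
        + (-16*S)*(((k : K[X])+2)*Q + S*derivative Q) + 4*(S*Q) with hG2def
      have hSG2 : S * G₂ = G := by
        rw [hG2def, hG, hCs]
        ring
      have hG20 : G₂ = 0 := by
        rcases mul_eq_zero.mp (by rw [hSG2]; exact hG0) with h' | h'
        · exact absurd h' hSne
        · exact h'
      have heval2 := congrArg (eval α) hG20
      simp only [hG2def, eval_add, eval_mul, eval_sub, eval_pow, eval_X, eval_C, eval_one,
        eval_ofNat, eval_neg, eval_natCast, hSev, mul_zero, zero_mul, add_zero, zero_add,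
        eval_zero, neg_zero] at heval2
      norm_num at heval2
      rcases heval2 with h' | h'
      · rcases h' with h'' | h''
        · rw [h''] at h16a; norm_num at h16a
        · rw [h''] at h16a; norm_num at h16a
      · rcases h' with h'' | h'' | h''
        · exact hk2 h''
        · exact hk1 h''
        · exact hQα h''
  -- Step 7: conclude.
  constructor
  · intro f hf
    by_contra hu
    have hf0 : f ≠ 0 := by
      rintro rfl
      rw [mul_zero, zero_dvd_iff] at hf
      exact hPm0 hf
    have hdeg0 : f.degree ≠ 0 := fun h => hu (Polynomial.isUnit_iff_degree_eq_zero.mpr h)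
    obtain ⟨α, hα⟩ := IsAlgClosed.exists_root f hdeg0
    obtain ⟨g, hg⟩ := Polynomial.dvd_iff_isRoot.mpr hα
    refine hC α (dvd_trans ⟨g * g, ?_⟩ hf)
    rw [hg]; ring
  · rintro x ⟨h1, h2⟩
    have hx1 : Pm.eval x = 0 := by
      rw [hPmdef, Polynomial.eval_map, ← Polynomial.aeval_def]; exact h1
    have hx2 : (derivative Pm).eval x = 0 := by
      rw [hPmdef, Polynomial.derivative_map, Polynomial.eval_map, ← Polynomial.aeval_def]
      exact h2
    obtain ⟨g, hg⟩ := Polynomial.dvd_iff_isRoot.mpr hx1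
    have hdg : derivative Pm = g + (X - C x) * derivative g := by
      rw [hg, derivative_mul]
      simp
    rw [hdg] at hx2
    simp [eval_add, eval_mul, eval_sub, eval_X, eval_C] at hx2
    obtain ⟨g', hg'⟩ := Polynomial.dvd_iff_isRoot.mpr hx2
    exact hC x ⟨g', by rw [hg, hg']; ring⟩
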